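/- Given a maximum (V1–V2)-linking L in a finite directed graph that does not cover node v ∈ V1, and given a direct (V1–V2)-path P starting at v, one can construct a (V1–V2)-linking of the same size as L that covers v: letting x be the first node of P lying on some path of L, replace in that path of L the segment from its start to x by the segment of P from v to x. -/

import Mathlib

/-- A direct (A–T)-path: a nonempty simple directed path whose first node is in `A`,
whose last node is in `T`, and which meets `A` only at its first node and `T` only
at its last node. -/
def DirectPath {V : Type} (E : V → V → Prop) (A T : Set V) (l : List V) : Prop :=
  l ≠ [] ∧ l.Chain' E ∧ l.Nodup ∧
  (∃ a ∈ A, l.head? = some a) ∧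
  (∃ b ∈ T, l.getLast? = some b) ∧
  (∀ v ∈ l, v ∈ A → l.head? = some v) ∧
  (∀ v ∈ l, v ∈ T → l.getLast? = some v)

/-- An (A–T)-linking of size `p`: `p` pairwise vertex-disjoint direct (A–T)-paths. -/
def Linking {V : Type} (E : V → V → Prop) (A T : Set V) (p : ℕ)
    (P : Fin p → List V) : Prop :=
  (∀ i, DirectPath E A T (P i)) ∧
  ∀ i j, i ≠ j → ∀ v, v ∈ P i → v ∉ P j

/-- An (A,T)-separator: a node set met by every directed path from `A` to `T`. -/
def IsSeparator {V : Type} (E : V → V → Prop) (A T S : Set V) : Prop :=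
  ∀ l : List V, l ≠ [] → l.Chain' E →
    (∃ a ∈ A, l.head? = some a) → (∃ b ∈ T, l.getLast? = some b) →
    ∃ v ∈ l, v ∈ S

/-- Rerouting: given a maximum (A–T)-linking `L` not covering `v ∈ A` and a direct
(A–T)-path starting at `v`, there is an (A–T)-linking of the same size covering `v`. -/
theorem exists_same_size_linking_covering {V : Type} [Fintype V] [DecidableEq V]
    (E : V → V → Prop) (A T : Set V)
    (p : ℕ) (L : Fin p → List V) (hL : Linking E A T p L)
    (hmax : ∀ q (Q : Fin q → List V), Linking E A T q Q → q ≤ p)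
    (v : V) (hv : v ∈ A) (hvnot : ∀ i, v ∉ L i)
    (P0 : List V) (hP0 : DirectPath E A T P0) (hstart : P0.head? = some v) :
    ∃ Q : Fin p → List V, Linking E A T p Q ∧ ∃ i, v ∈ Q i := by
  classical
  set pr : V → Bool := fun u => decide (∀ i, u ∉ L i) with hpr
  set t := P0.takeWhile pr with ht
  set d := P0.dropWhile pr with hd
  have hsplit : t ++ d = P0 := List.takeWhile_append_dropWhile (p := pr) (l := P0)
  have ht_no : ∀ u ∈ t, ∀ j, u ∉ L j := by
    intro u hu
    have := List.mem_takeWhile_imp hu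
    simpa [hpr] using this
  obtain ⟨hP0ne, hP0ch, hP0nd, _, ⟨b0, hb0T, hb0⟩, hP0A, hP0T⟩ := hP0
  rcases hdc : d with _ | ⟨x, rest⟩
  · -- P0 is disjoint from all paths of L: extend to a bigger linking, contradiction
    exfalso
    have hall : ∀ u ∈ P0, ∀ j, u ∉ L j := by
      intro u hu
      have : pr u = true := by
        have : ∀ x ∈ P0, pr x = true := List.dropWhile_eq_nil_iff.mp (by rw [← hd, hdc])
        exact this u hu
      simpa [hpr] using this
    have hlink : Linking E A T (p + 1) (Fin.cons P0 L) := by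
      constructor
      · intro i
        refine Fin.cases ?_ ?_ i
        · simpa using ⟨hP0ne, hP0ch, hP0nd, ⟨v, hv, hstart⟩, ⟨b0, hb0T, hb0⟩, hP0A, hP0T⟩
        · intro j; simpa using hL.1 j
      · intro i j hij u hu hu'
        rcases Fin.eq_zero_or_eq_succ i with rfl | ⟨i', rfl⟩ <;>
          rcases Fin.eq_zero_or_eq_succ j with rfl | ⟨j', rfl⟩
        · exact hij rfl
        · simp only [Fin.cons_zero] at hu
          simp only [Fin.cons_succ] at hu'
          exact hall u hu j' hu'
        · simp only [Fin.cons_succ] at hu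
          simp only [Fin.cons_zero] at hu'
          exact hall u hu' i' hu
        · simp only [Fin.cons_succ] at hu hu'
          exact hL.2 i' j' (fun h => hij (h ▸ rfl)) u hu hu'
    have := hmax (p + 1) _ hlink
    omega
  · -- x is the first vertex of P0 lying on some path L i
    have hxP0 : x ∈ P0 := by rw [← hsplit, hdc]; simp
    have hxL : ∃ i, x ∈ L i := by
      have hne : List.dropWhile pr P0 ≠ [] := by rw [← hd, hdc]; simp
      have h2 := List.head_dropWhile_not pr hne
      have h1 : (List.dropWhile pr P0).head? = some x := by rw [← hd, hdc]; rfl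
      rw [List.head?_eq_head hne, Option.some_inj] at h1
      rw [h1] at h2
      simp only [hpr, decide_eq_false_iff_not, not_forall, not_not] at h2
      exact h2
    obtain ⟨i, hx⟩ := hxL
    obtain ⟨hLine, hLich, hLind, ⟨ai, haiA, hai⟩, ⟨bi, hbiT, hbi⟩, hLiA, hLiT⟩ := hL.1 i
    obtain ⟨pre, suf, hLieq⟩ := List.append_of_mem hx
    have hP0eq : P0 = t ++ x :: rest := by rw [← hsplit, hdc]
    -- t is nonempty and starts with v
    have htne : t ≠ [] := by
      intro h
      rw [hP0eq, h, List.nil_append] at hstart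
      simp at hstart
      exact hvnot i (hstart ▸ hx)
    have hthead : t.head? = some v := by
      rw [hP0eq, List.head?_append_of_ne_nil t htne] at hstart; exact hstart
    have hvt : v ∈ t := List.mem_of_mem_head? (by rw [hthead]; simp)
    set N := t ++ x :: suf with hN
    have hNne : N ≠ [] := by simp [hN, htne]
    -- chain
    have hNch : N.Chain' E := by
      rw [hP0eq] at hP0ch
      obtain ⟨c1, c2, clink⟩ := List.isChain_append.mp hP0ch
      rw [hLieq] at hLich
      obtain ⟨_, c2', _⟩ := List.isChain_append.mp hLich
      exact List.isChain_append.mpr ⟨c1, c2', by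
        intro a ha b hb
        simp only [List.head?_cons, Option.mem_def, Option.some.injEq] at hb
        exact clink a ha b (by simp [← hb])⟩
    -- nodup
    have hP0nd' := hP0nd; rw [hP0eq, List.nodup_append] at hP0nd'
    have hLind' := hLind; rw [hLieq, List.nodup_append] at hLind'
    have hNnd : N.Nodup := by
      rw [hN, List.nodup_append]
      refine ⟨hP0nd'.1, hLind'.2.1, ?_⟩
      intro u hu w hu' huw
      subst huw
      exact ht_no u hu i (hLieq ▸ List.mem_append_right pre hu')
    -- head
    have hNhead : N.head? = some v := by
      rw [hN, List.head?_append_of_ne_nil t htne]; exact hthead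
    -- last
    have hNlast : N.getLast? = (L i).getLast? := by
      rw [hN, hLieq, List.getLast?_append, List.getLast?_append,
        List.getLast?_eq_getLast (l := x :: suf) (by simp)]
      simp
    have hxne_v : x ≠ v := fun h => hvnot i (h ▸ hx)
    -- A property
    have hNA : ∀ u ∈ N, u ∈ A → N.head? = some u := by
      intro u hu huA
      rcases List.mem_append.mp hu with hu | hu
      · have := hP0A u (hP0eq ▸ List.mem_append_left _ hu) huA
        rw [hstart] at this
        rw [hNhead, this]
      · have hhd := hLiA u (hLieq ▸ List.mem_append_right pre hu) huA
        rw [hLieq] at hhd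
        rcases hpre : pre with _ | ⟨a, pre'⟩
        · rw [hpre, List.nil_append, List.head?_cons] at hhd
          have hux : u = x := by simpa using hhd.symm
          have := hP0A x hxP0 (hux ▸ huA)
          rw [hstart] at this
          have hvx : v = x := by simpa using this
          exact (hxne_v hvx.symm).elim
        · rw [hpre] at hhd
          simp only [List.cons_append, List.head?_cons, Option.some.injEq] at hhd
          exfalso
          exact hLind'.2.2 a (hpre ▸ List.mem_cons_self) u hu hhd
    -- T property
    have hNT : ∀ u ∈ N, u ∈ T → N.getLast? = some u := by
      intro u hu huT
      rcases List.mem_append.mp hu with hu | hu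
      · exfalso
        have := hP0T u (hP0eq ▸ List.mem_append_left _ hu) huT
        rw [hP0eq, List.getLast?_append] at this
        have hu2 : u ∈ x :: rest := by
          have hne : (x :: rest).getLast? = some ((x :: rest).getLast (by simp)) := by
            simp [List.getLast?_eq_getLast]
          rw [hne] at this
          simp only [Option.some_or, Option.some.injEq] at this
          exact this ▸ List.getLast_mem _
        exact hP0nd'.2.2 u hu u hu2 rfl
      · rw [hNlast]
        exact hLiT u (hLieq ▸ List.mem_append_right pre hu) huT
    have hNdp : DirectPath E A T N := by
      refine ⟨hNne, hNch, hNnd, ⟨v, hv, hNhead⟩, ⟨bi, hbiT, by rw [hNlast]; exact hbi⟩,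
        hNA, hNT⟩
    -- the new linking
    refine ⟨Function.update L i N, ⟨?_, ?_⟩, ⟨i, ?_⟩⟩
    · intro j
      by_cases hji : j = i
      · rw [hji, Function.update_self]; exact hNdp
      · rw [Function.update_of_ne hji]; exact hL.1 j
    · intro j k hjk u hu hu'
      have hNsub : ∀ w, w ∈ N → w ∈ t ∨ w ∈ L i := by
        intro w hw
        rcases List.mem_append.mp hw with h | h
        · exact Or.inl h
        · exact Or.inr (hLieq ▸ List.mem_append_right pre h)
      by_cases hji : j = i
      · subst hji
        rw [Function.update_self] at hu
        rw [Function.update_of_ne (Ne.symm hjk)] at hu'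
        rcases hNsub u hu with h | h
        · exact ht_no u h k hu'
        · exact hL.2 j k hjk u h hu'
      · rw [Function.update_of_ne hji] at hu
        by_cases hki : k = i
        · subst hki
          rw [Function.update_self] at hu'
          rcases hNsub u hu' with h | h
          · exact ht_no u h j hu
          · exact hL.2 j k hjk u hu h
        · rw [Function.update_of_ne hki] at hu'
          exact hL.2 j k hjk u hu hu'
    · rw [Function.update_self]
      exact List.mem_append_left _ hvt
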